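/- Soundness of the partially synchronous LOLA valuation: for every non-recursive LOLA stream expression e, every skew ε ≥ 1, and every position j ∈ {0,…,N}, the synchronous value is among the partially synchronous values, i.e., val_S(e)(j) ∈ val_PS^ε(e)(j). -/
import Mathlib

/-- Non-recursive LOLA stream expressions over a value type `T` and `m` input
stream variables: constants, stream variables, pointwise `k`-ary function
applications, and offset expressions `e[p,c]` with integer offset `p` and
default value `c`. -/
inductive LExpr (T : Type) (m : ℕ) : Type where
  | const : T → LExpr T m
  | var : Fin m → LExpr T m
  | app : (k : ℕ) → ((Fin k → T) → T) → (Fin k → LExpr T m) → LExpr T m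
  | offset : LExpr T m → ℤ → T → LExpr T m

/-- The synchronous valuation `val_S` of a LOLA expression at position `j`,
given the trace length `N` and input streams `τ`. -/
def valS {T : Type} {m : ℕ} (N : ℕ) (τ : Fin m → ℕ → T) : LExpr T m → ℕ → T
  | .const c, _ => c
  | .var i, j => τ i j
  | .app _ f es, j => f (fun l => valS N τ (es l) j)
  | .offset e p c, j =>
      if 0 ≤ (j : ℤ) + p ∧ (j : ℤ) + p ≤ (N : ℤ) then valS N τ e ((j : ℤ) + p).toNat
      else c

/-- The partially synchronous valuation `val_PS^ε` of a LOLA expression at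
position `j`, assigning the set of values obtainable under clock skew `ε`. -/
def valPS {T : Type} {m : ℕ} (N : ℕ) (τ : Fin m → ℕ → T) (ε : ℕ) :
    LExpr T m → ℕ → Set T
  | .const c, _ => {c}
  | .var i, j =>
      {v | ∃ κ : ℕ, max 0 ((j : ℤ) - (ε : ℤ) + 1) ≤ (κ : ℤ) ∧
        (κ : ℤ) ≤ min (N : ℤ) ((j : ℤ) + (ε : ℤ) - 1) ∧ τ i κ = v}
  | .app k f es, j =>
      {v | ∃ vs : Fin k → T, (∀ l, vs l ∈ valPS N τ ε (es l) j) ∧ f vs = v}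
  | .offset e p c, j =>
      if 0 ≤ (j : ℤ) + p ∧ (j : ℤ) + p ≤ (N : ℤ) then valPS N τ ε e ((j : ℤ) + p).toNat
      else {c}

/-- soundness of the partially synchronous LOLA valuation: for
every non-recursive LOLA expression `e`, skew `ε ≥ 1`, and position
`j ∈ {0,…,N}`, the synchronous value is among the partially synchronous
values: `val_S(e)(j) ∈ val_PS^ε(e)(j)`. -/
theorem valS_mem_valPS {T : Type} {m : ℕ} (N : ℕ) (τ : Fin m → ℕ → T)
    (ε : ℕ) (hε : 1 ≤ ε) (e : LExpr T m) (j : ℕ) (hj : j ≤ N) :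
    valS N τ e j ∈ valPS N τ ε e j := by
  induction e generalizing j with
  | const c => simp [valS, valPS]
  | var i =>
      refine ⟨j, ?_, ?_, rfl⟩
      · have : (1 : ℤ) ≤ ε := by exact_mod_cast hε
        simp; omega
      · have : (1 : ℤ) ≤ ε := by exact_mod_cast hε
        have : (j : ℤ) ≤ N := by exact_mod_cast hj
        simp; omega
  | app k f es ih =>
      exact ⟨fun l => valS N τ (es l) j, fun l => ih l j hj, rfl⟩
  | offset e p c ih =>
      simp only [valS, valPS]
      split
      · next h =>
          apply ih
          omega
      · exact rfl
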